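/- Let M ≥ 2, α = M^{-k}, β = M^{2k} for some k ≥ 1, and define φ_k(z₁,z₂) = log|z₁| + α·log(|z₁| + |z₂/k|^β) on ℂ². For any integers m ≥ 0 and ε ∈ (0,1), if (1-ε)(1+α) - (m+1)/β ≥ 1 then ∫_{Δ×Δ} |z₂|^{2m} e^{-2(1-ε)φ_k} dλ₄ = +∞, where Δ is the unit disc in ℂ and λ₄ is Lebesgue measure on ℂ². -/

import Mathlib

open MeasureTheory Filter Metric Complex Set Topology

noncomputable section

/-- `e2 x` represents `e^{-2x}` for extended-real `x` (value `0` at `x = ⊥`,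
where the correct value `+∞` cannot be represented in `ℝ`; in all statements the
`⊥`-locus is negligible or handled separately). -/
def e2 (x : EReal) : ℝ := if x = ⊥ then 0 else Real.exp (-2 * x.toReal)

/-- Subharmonicity of `u : ℂ → EReal` on `U`: upper semicontinuity together with
the sub-mean-value inequality over all sufficiently small circles. -/
def SubharmonicOn' (u : ℂ → EReal) (U : Set ℂ) : Prop :=
  UpperSemicontinuousOn u U ∧
    ∀ z ∈ U, ∀ᶠ (r : ℝ) in 𝓝[>] (0 : ℝ),
      u z ≤ (((2 * Real.pi)⁻¹ *
        ∫ θ in (0:ℝ)..(2 * Real.pi),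
          (u (z + (r : ℂ) * Complex.exp ((θ : ℂ) * Complex.I))).toReal : ℝ) : EReal)

/-- `u` is subharmonic on some open neighborhood of `z₀`. -/
def SubharmonicNear (u : ℂ → EReal) (z₀ : ℂ) : Prop :=
  ∃ U : Set ℂ, IsOpen U ∧ z₀ ∈ U ∧ SubharmonicOn' u U

/-- The Lelong number of `u` at `z₀` equals `γ`:
`(sup_{|z-z₀|=r} u)/log r → γ` as `r → 0⁺`. -/
def HasLelongAt (u : ℂ → EReal) (z₀ : ℂ) (γ : ℝ) : Prop :=
  Tendsto (fun r : ℝ => (⨆ z ∈ sphere z₀ r, u z).toReal / Real.log r)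
    (𝓝[>] (0:ℝ)) (𝓝 γ)

/-- `f` is integrable on some ball around `z₀` (local integrability near `z₀`). -/
def LocInt (f : ℂ → ℝ) (z₀ : ℂ) : Prop :=
  ∃ r > 0, IntegrableOn f (ball z₀ r) volume

/-- Plurisubharmonicity of `u : ℂ × ℂ → EReal` on `U`: upper semicontinuity
together with subharmonicity of the restriction to every complex line. -/
def PSHOn (u : ℂ × ℂ → EReal) (U : Set (ℂ × ℂ)) : Prop :=
  UpperSemicontinuousOn u U ∧
    ∀ a b : ℂ × ℂ, SubharmonicOn' (fun t : ℂ => u (a + t • b)) {t : ℂ | a + t • b ∈ U}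

/-- The (two dimensional) Lelong number of `u` at `x` equals `γ`:
`(sup_{|z-x|≤r} u)/log r → γ` as `r → 0⁺`. -/
def HasLelongAt2 (u : ℂ × ℂ → EReal) (x : ℂ × ℂ) (γ : ℝ) : Prop :=
  Tendsto (fun r : ℝ => (⨆ z ∈ closedBall x r, u z).toReal / Real.log r)
    (𝓝[>] (0:ℝ)) (𝓝 γ)

/-- `f` is integrable on some ball around `x` in `ℂ²`. -/
def LocInt2 (f : ℂ × ℂ → ℝ) (x : ℂ × ℂ) : Prop :=
  ∃ r > 0, IntegrableOn f (ball x r) volume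

/-- The k-th term (k ≥ 1) of the Guan–Li series:
`α_k · log(|z₁| + |z₂/k|^{β_k})` with `α_k = M^{-k}`, `β_k = M^{2k}`. -/
def phiTerm (M : ℝ) (k : ℕ) (z : ℂ × ℂ) : ℝ :=
  M ^ (-(k : ℤ)) * Real.log (‖z.1‖ +
    (‖z.2‖ / (k : ℝ)) ^ (M ^ (2 * k) : ℝ))

/-- The plurisubharmonic weight
`φ(z) = log|z₁| + ∑_{k≥1} M^{-k} log(|z₁| + |z₂/k|^{M^{2k}})`,
with value `⊥ = -∞` on `{z₁ = 0}` (where the series diverges to `-∞`). -/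
def phi (M : ℝ) (z : ℂ × ℂ) : EReal :=
  if z.1 = 0 then ⊥ else
    ((Real.log (‖z.1‖) + ∑' k : ℕ, phiTerm M (k + 1) z : ℝ) : EReal)

lemma abs_mem_ball' {x : ℂ} {r : ℝ} : x ∈ ball (0:ℂ) r ↔ ‖x‖ < r := by
  simp [Complex.dist_eq]

lemma aux_div (q δ : ℝ) (hq : q ≤ -2) (hδ0 : 0 < δ) (hδ1 : δ ≤ 1) :
    ∫⁻ z in ball (0:ℂ) δ \ {0}, ENNReal.ofReal (‖z‖ ^ q) = ⊤ := by
  set A : ℕ → Set ℂ := fun n => ball (0:ℂ) (δ * 2⁻¹ ^ n) \ ball 0 (δ * 2⁻¹ ^ (n+1)) with hA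
  have hrpos : ∀ n : ℕ, 0 < δ * 2⁻¹ ^ n := fun n => by positivity
  have hrle1 : ∀ n : ℕ, δ * 2⁻¹ ^ n ≤ 1 := fun n => by
    calc δ * 2⁻¹ ^ n ≤ 1 * 1 := by
          apply mul_le_mul hδ1 (pow_le_one₀ (by norm_num) (by norm_num)) (by positivity) one_pos.le
      _ = 1 := by norm_num
  have hmem : ∀ n (z : ℂ), z ∈ A n ↔
      δ * 2⁻¹ ^ (n+1) ≤ ‖z‖ ∧ ‖z‖ < δ * 2⁻¹ ^ n := by
    intro n z
    simp only [hA, mem_diff, abs_mem_ball', not_lt, and_comm]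
  have hmeas : ∀ n, MeasurableSet (A n) :=
    fun n => measurableSet_ball.diff measurableSet_ball
  have hsub : (⋃ n, A n) ⊆ ball (0:ℂ) δ \ {0} := by
    intro z hz
    obtain ⟨n, hn⟩ := mem_iUnion.1 hz
    rw [hmem] at hn
    refine ⟨abs_mem_ball'.2 (lt_of_lt_of_le hn.2 ?_), ?_⟩
    · calc δ * 2⁻¹ ^ n ≤ δ * 1 := by
            apply mul_le_mul_of_nonneg_left (pow_le_one₀ (by norm_num) (by norm_num)) hδ0.le
        _ = δ := by ring
    · simp only [mem_singleton_iff]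
      intro h
      have h1 := hn.1
      rw [h] at h1
      simp only [norm_zero] at h1
      linarith [hrpos (n+1)]
  have hdisj0 : ∀ i j : ℕ, i < j → Disjoint (A i) (A j) := by
    intro i j hij
    rw [Set.disjoint_left]
    intro z hzi hzj
    rw [hmem] at hzi hzj
    have h1 : δ * 2⁻¹ ^ j ≤ δ * 2⁻¹ ^ (i+1) := by
      apply mul_le_mul_of_nonneg_left _ hδ0.le
      exact pow_le_pow_of_le_one (by norm_num) (by norm_num) hij
    linarith [hzi.1, hzj.2]
  have hdisj : Pairwise (Function.onFun Disjoint A) := by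
    intro i j hij
    rcases lt_or_gt_of_ne hij with h | h
    · exact hdisj0 i j h
    · exact (hdisj0 j i h).symm
  have hvol : ∀ n, volume (A n) = ENNReal.ofReal (Real.pi * (3/4) * (δ * 2⁻¹ ^ n)^2) := by
    intro n
    have hss : ball (0:ℂ) (δ * 2⁻¹ ^ (n+1)) ⊆ ball 0 (δ * 2⁻¹ ^ n) :=
      ball_subset_ball (by
        apply mul_le_mul_of_nonneg_left _ hδ0.le
        exact pow_le_pow_of_le_one (by norm_num) (by norm_num) (by omega))
    rw [hA]
    rw [measure_diff hss measurableSet_ball.nullMeasurableSet measure_ball_lt_top.ne,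
      Complex.volume_ball, Complex.volume_ball]
    rw [← ENNReal.ofReal_pow (hrpos n).le, ← ENNReal.ofReal_pow (hrpos (n+1)).le]
    simp only [← ENNReal.ofReal_coe_nnreal, NNReal.coe_real_pi]
    rw [← ENNReal.ofReal_mul (by positivity), ← ENNReal.ofReal_mul (by positivity),
      ← ENNReal.ofReal_sub _ (by positivity)]
    congr 1
    ring
  have key : ∀ n : ℕ, ENNReal.ofReal (Real.pi * (3/4)) ≤ ∫⁻ z in A n, ENNReal.ofReal (‖z‖ ^ q) := by
    intro n
    set r : ℝ := δ * 2⁻¹ ^ n with hr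
    calc ENNReal.ofReal (Real.pi * (3/4))
        ≤ ENNReal.ofReal (r ^ q * (Real.pi * (3/4) * r ^ 2)) := by
          apply ENNReal.ofReal_le_ofReal
          have h1 : r ^ q * r ^ 2 = r ^ (q + 2) := by
            have h2 : r ^ (2:ℝ) = r ^ (2:ℕ) := by
              rw [show (2:ℝ) = ((2:ℕ):ℝ) by norm_num, Real.rpow_natCast]
            rw [← h2, ← Real.rpow_add (hrpos n)]
          have h2 : (1:ℝ) ≤ r ^ (q + 2) :=
            Real.one_le_rpow_of_pos_of_le_one_of_nonpos (hrpos n) (hrle1 n) (by linarith)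
          calc Real.pi * (3/4) = 1 * (Real.pi * (3/4)) := by ring
            _ ≤ r ^ (q+2) * (Real.pi * (3/4)) := by
                apply mul_le_mul_of_nonneg_right h2 (by positivity)
            _ = r ^ q * (Real.pi * (3/4) * r ^ 2) := by rw [← h1]; ring
      _ = ENNReal.ofReal (r ^ q) * volume (A n) := by
          rw [hvol n, ← ENNReal.ofReal_mul (Real.rpow_nonneg (hrpos n).le q)]
      _ = ∫⁻ _ in A n, ENNReal.ofReal (r ^ q) := (setLIntegral_const _ _).symm
      _ ≤ ∫⁻ z in A n, ENNReal.ofReal (‖z‖ ^ q) := by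
          apply setLIntegral_mono' (hmeas n)
          intro z hz
          rw [hmem] at hz
          apply ENNReal.ofReal_le_ofReal
          apply Real.rpow_le_rpow_of_nonpos _ hz.2.le (by linarith)
          calc (0:ℝ) < δ * 2⁻¹ ^ (n+1) := hrpos (n+1)
            _ ≤ ‖z‖ := hz.1
  refine top_unique ?_
  calc (⊤ : ENNReal) = ∑' _ : ℕ, ENNReal.ofReal (Real.pi * (3/4)) := by
        refine (ENNReal.tsum_const_eq_top_of_ne_zero ?_).symm
        simp only [ne_eq, ENNReal.ofReal_eq_zero, not_le]
        positivity
    _ ≤ ∑' n, ∫⁻ z in A n, ENNReal.ofReal (‖z‖ ^ q) := ENNReal.tsum_le_tsum key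
    _ = ∫⁻ z in ⋃ n, A n, ENNReal.ofReal (‖z‖ ^ q) := (lintegral_iUnion hmeas hdisj _).symm
    _ ≤ _ := lintegral_mono_set hsub


lemma measurable_rpow_const' {α : Type*} [MeasurableSpace α] {f : α → ℝ} (hf : Measurable f)
    (h0 : ∀ x, 0 ≤ f x) (c : ℝ) : Measurable fun x => f x ^ c := by
  classical
  have heq : (fun x => f x ^ c) = Set.piecewise {x | f x = 0} (fun _ => (0:ℝ) ^ c)
      (fun x => Real.exp (Real.log (f x) * c)) := by
    funext x
    by_cases hx : f x = 0
    · rw [Set.piecewise_eq_of_mem _ _ _ (show x ∈ {x | f x = 0} from hx), hx]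
    · rw [Set.piecewise_eq_of_notMem _ _ _ (show x ∉ {x | f x = 0} from hx)]
      exact Real.rpow_def_of_pos (lt_of_le_of_ne (h0 x) (Ne.symm hx)) c
  rw [heq]
  exact Measurable.piecewise (hf (measurableSet_singleton 0)) measurable_const
    (Real.measurable_exp.comp ((Real.measurable_log.comp hf).mul_const c))



/-- Let `M ≥ 2`, `α = M^{-k}`, `β = M^{2k}` for some `k ≥ 1`,
and `φ_k(z) = log|z₁| + α·log(|z₁| + |z₂/k|^β)`, so
`e^{-2(1-ε)φ_k} = |z₁|^{-2(1-ε)} (|z₁|+|z₂/k|^β)^{-2(1-ε)α}`.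
For `m ≥ 0` and `ε ∈ (0,1)`, if `(1-ε)(1+α) - (m+1)/β ≥ 1`, then
`∫_{Δ×Δ} |z₂|^{2m} e^{-2(1-ε)φ_k} dλ₄ = +∞`. -/
theorem stmt7 (M : ℝ) (hM : 2 ≤ M) (k : ℕ) (hk : 1 ≤ k) (m : ℕ) (ε : ℝ)
    (hε : ε ∈ Ioo (0:ℝ) 1)
    (hexp : (1 - ε) * (1 + M ^ (-(k : ℤ))) - ((m : ℝ) + 1) / M ^ (2 * k) ≥ 1) :
    ∫⁻ z in (ball (0:ℂ) 1) ×ˢ (ball (0:ℂ) 1),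
      ENNReal.ofReal (‖z.2‖ ^ (2 * m) *
        (‖z.1‖ ^ (-(2 * (1 - ε)) : ℝ) *
          (‖z.1‖ + (‖z.2‖ / (k : ℝ)) ^ (M ^ (2 * k) : ℝ))
            ^ (-(2 * (1 - ε) * M ^ (-(k : ℤ))) : ℝ))) = ⊤ := by
  have hM0 : (0:ℝ) < M := by linarith
  have habs : Measurable (fun x : ℂ => ‖x‖) := measurable_norm
  set b : ℝ := M ^ (2 * k) with hbdef
  set al : ℝ := M ^ (-(k : ℤ)) with haldef
  have hb1 : (1:ℝ) ≤ b := one_le_pow₀ (by linarith)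
  have hb0 : (0:ℝ) < b := by linarith
  have hal0 : 0 < al := zpow_pos hM0 _
  have hε0 : 0 < ε := hε.1
  have hε1 : ε < 1 := hε.2
  have h1ε : 0 < 1 - ε := by linarith
  set a : ℝ := 2 * (1 - ε) * al with hadef
  have ha0 : 0 < a := by positivity
  have hk0 : (0:ℝ) < k := by exact_mod_cast hk
  have hk1 : (1:ℝ) ≤ k := by exact_mod_cast hk
  set δ : ℝ := (k:ℝ) ^ (-b) with hδdef
  have hδ0 : 0 < δ := Real.rpow_pos_of_pos hk0 _
  have hδ1 : δ ≤ 1 := Real.rpow_le_one_of_one_le_of_nonpos hk1 (by linarith)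
  set r : ℂ → ℝ := fun x => (k:ℝ) * ‖x‖ ^ (1/b) with hrdef
  have hr0 : ∀ x, 0 ≤ r x := fun x =>
    mul_nonneg hk0.le (Real.rpow_nonneg (norm_nonneg _) _)
  have hδpow : δ ^ (1/b) = (k:ℝ)⁻¹ := by
    rw [hδdef, ← Real.rpow_mul hk0.le]
    rw [show -b * (1/b) = -1 by field_simp, Real.rpow_neg_one]
  have hrlt1 : ∀ x : ℂ, ‖x‖ < δ → r x < 1 := by
    intro x hx
    have h1 : ‖x‖ ^ (1/b) < δ ^ (1/b) :=
      Real.rpow_lt_rpow (norm_nonneg _) hx (by positivity)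
    calc r x < (k:ℝ) * δ ^ (1/b) := mul_lt_mul_of_pos_left h1 hk0
      _ = 1 := by rw [hδpow, mul_inv_cancel₀ hk0.ne']
  -- the sets
  set B : Set ℂ := ball (0:ℂ) δ \ {0} with hBdef
  have hBmeas : MeasurableSet B := measurableSet_ball.diff (measurableSet_singleton 0)
  set Ann : ℂ → Set ℂ := fun x => ball (0:ℂ) (r x) \ ball 0 (r x / 2) with hAnndef
  have hAnnmeas : ∀ x, MeasurableSet (Ann x) := fun x =>
    measurableSet_ball.diff measurableSet_ball
  set S : Set (ℂ × ℂ) := {z : ℂ × ℂ | z.1 ∈ B ∧ z.2 ∈ Ann z.1} with hSdef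
  -- measurability
  have hmr : Measurable fun z : ℂ × ℂ => r z.1 := by
    have : Measurable fun z : ℂ × ℂ => ‖z.1‖ ^ (1/b) :=
      measurable_rpow_const' (habs.comp measurable_fst) (fun z => norm_nonneg _) _
    exact this.const_mul _
  have hma2 : Measurable fun z : ℂ × ℂ => ‖z.2‖ := habs.comp measurable_snd
  have hmemS : ∀ z : ℂ × ℂ, z ∈ S ↔
      z.1 ∈ B ∧ (‖z.2‖ < r z.1 ∧ r z.1 / 2 ≤ ‖z.2‖) := by
    intro z
    simp only [hSdef, mem_setOf_eq, hAnndef, mem_diff, abs_mem_ball', not_lt]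
  have hSmeas : MeasurableSet S := by
    have hS2 : S = {z : ℂ × ℂ | z.1 ∈ B} ∩
        ({z : ℂ × ℂ | ‖z.2‖ < r z.1} ∩ {z : ℂ × ℂ | r z.1 / 2 ≤ ‖z.2‖}) := by
      ext z
      rw [hmemS]
      simp [mem_setOf_eq]
    rw [hS2]
    exact (measurable_fst hBmeas).inter
      ((measurableSet_lt hma2 hmr).inter (measurableSet_le (hmr.div_const 2) hma2))
  -- exponents and constants
  set q' : ℝ := 2 * (m:ℝ) / b - 2 * (1 - ε) - a with hq'def
  set q : ℝ := q' + 2 / b with hqdef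
  set C2 : ℝ := ((k:ℝ)/2) ^ (2*m) * 2 ^ (-a : ℝ) with hC2def
  have hC20 : 0 < C2 := by
    rw [hC2def]
    have := Real.rpow_pos_of_pos (show (0:ℝ) < 2 by norm_num) (-a)
    positivity
  set C3 : ℝ := C2 * (Real.pi * (3/4) * (k:ℝ)^2) with hC3def
  have hC30 : 0 < C3 := by
    rw [hC3def]
    have := Real.pi_pos
    positivity
  have hq : q ≤ -2 := by
    have e2 : q = -2 * ((1-ε)*(1+al) - ((m:ℝ)+1)/b) := by
      rw [hqdef, hq'def, hadef]
      field_simp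
      ring
    rw [e2]
    linarith [hexp]
  -- Step A : pointwise lower bound on S
  have stepA : ∀ z ∈ S, ENNReal.ofReal (C2 * ‖z.1‖ ^ q')
      ≤ ENNReal.ofReal (‖z.2‖ ^ (2 * m) *
        (‖z.1‖ ^ (-(2 * (1 - ε)) : ℝ) *
          (‖z.1‖ + (‖z.2‖ / (k : ℝ)) ^ b) ^ (-a : ℝ))) := by
    intro z hz
    rw [hmemS] at hz
    obtain ⟨hz1, hu1, hu2⟩ := hz
    set t : ℝ := ‖z.1‖ with htdef
    set u : ℝ := ‖z.2‖ with hudef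
    have ht0 : 0 < t := norm_pos_iff.mpr hz1.2
    have hu0 : 0 ≤ u := norm_nonneg _
    have hrz : r z.1 = (k:ℝ) * t ^ (1/b) := rfl
    rw [hrz] at hu1 hu2
    apply ENNReal.ofReal_le_ofReal
    -- basic bounds
    have hfrac : (u / k) ^ b < t := by
      have h1 : u / k < t ^ (1/b) := by
        rw [div_lt_iff₀ hk0]
        calc u < (k:ℝ) * t ^ (1/b) := hu1
          _ = t ^ (1/b) * k := by ring
      calc (u/k) ^ b < (t ^ (1/b)) ^ b :=
            Real.rpow_lt_rpow (div_nonneg hu0 hk0.le) h1 hb0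
        _ = t := by
            rw [← Real.rpow_mul ht0.le, one_div, inv_mul_cancel₀ hb0.ne', Real.rpow_one]
    have hX0 : 0 ≤ (u/k) ^ b := Real.rpow_nonneg (div_nonneg hu0 hk0.le) _
    have hsum0 : 0 < t + (u/k) ^ b := by linarith
    have hP3 : (2:ℝ) ^ (-a:ℝ) * t ^ (-a:ℝ) ≤ (t + (u/k) ^ b) ^ (-a : ℝ) := by
      have h2 : ((2:ℝ)*t) ^ (-a:ℝ) = 2 ^ (-a:ℝ) * t ^ (-a:ℝ) :=
        Real.mul_rpow (by norm_num) ht0.le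
      rw [← h2]
      exact Real.rpow_le_rpow_of_nonpos hsum0 (by linarith) (by linarith)
    have hP1 : ((k:ℝ)/2) ^ (2*m) * t ^ (2*(m:ℝ)/b) ≤ u ^ (2*m) := by
      have h3 : (k:ℝ)/2 * t ^ (1/b) ≤ u := by linarith
      have h4 : (t ^ (1/b)) ^ (2*m) = t ^ (2*(m:ℝ)/b) := by
        rw [← Real.rpow_natCast (t ^ (1/b)) (2*m), ← Real.rpow_mul ht0.le]
        congr 1
        push_cast
        ring
      calc ((k:ℝ)/2) ^ (2*m) * t ^ (2*(m:ℝ)/b) = ((k:ℝ)/2 * t ^ (1/b)) ^ (2*m) := by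
            rw [mul_pow, h4]
        _ ≤ u ^ (2*m) := pow_le_pow_left₀ (by positivity) h3 _
    -- assemble
    have hexp_eq : t ^ (2*(m:ℝ)/b) * (t ^ (-(2 * (1 - ε)) : ℝ) * t ^ (-a:ℝ)) = t ^ q' := by
      rw [← Real.rpow_add ht0, ← Real.rpow_add ht0, hq'def]
      congr 1
      ring
    have nonneg1 : (0:ℝ) ≤ t ^ (-(2 * (1 - ε)) : ℝ) * ((2:ℝ) ^ (-a:ℝ) * t ^ (-a:ℝ)) :=
      mul_nonneg (Real.rpow_nonneg ht0.le _)
        (mul_nonneg (Real.rpow_nonneg (by norm_num) _) (Real.rpow_nonneg ht0.le _))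
    calc C2 * t ^ q'
        = (((k:ℝ)/2) ^ (2*m) * t ^ (2*(m:ℝ)/b)) *
            (t ^ (-(2 * (1 - ε)) : ℝ) * ((2:ℝ) ^ (-a:ℝ) * t ^ (-a:ℝ))) := by
          rw [hC2def, ← hexp_eq]
          ring
      _ ≤ u ^ (2*m) * (t ^ (-(2 * (1 - ε)) : ℝ) * ((t + (u/k) ^ b) ^ (-a : ℝ))) := by
          apply mul_le_mul hP1 _ nonneg1 (pow_nonneg hu0 _)
          exact mul_le_mul_of_nonneg_left hP3 (Real.rpow_nonneg ht0.le _)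
  -- volume of annuli
  have hvolAnn : ∀ x : ℂ, volume (Ann x) = ENNReal.ofReal (Real.pi * (3/4) * (r x)^2) := by
    intro x
    have hss : ball (0:ℂ) (r x / 2) ⊆ ball 0 (r x) := ball_subset_ball (by linarith [hr0 x])
    rw [hAnndef]
    rw [measure_diff hss measurableSet_ball.nullMeasurableSet measure_ball_lt_top.ne,
      Complex.volume_ball, Complex.volume_ball]
    rw [← ENNReal.ofReal_pow (hr0 x), ← ENNReal.ofReal_pow (by linarith [hr0 x])]
    simp only [← ENNReal.ofReal_coe_nnreal, NNReal.coe_real_pi]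
    rw [← ENNReal.ofReal_mul (by positivity), ← ENNReal.ofReal_mul (by positivity),
      ← ENNReal.ofReal_sub _ (by positivity)]
    congr 1
    ring
  -- Tonelli
  have hH : Measurable fun x : ℂ => ENNReal.ofReal (C2 * ‖x‖ ^ q') := by
    apply ENNReal.measurable_ofReal.comp
    exact (measurable_rpow_const' habs (fun x => norm_nonneg _) q').const_mul C2
  have hTon : (∫⁻ z in S, ENNReal.ofReal (C2 * ‖z.1‖ ^ q'))
      = ∫⁻ x in B, ENNReal.ofReal (C2 * ‖x‖ ^ q') * volume (Ann x) := by
    have hmeasF : Measurable (S.indicator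
        fun z : ℂ × ℂ => ENNReal.ofReal (C2 * ‖z.1‖ ^ q')) :=
      (hH.comp measurable_fst).indicator hSmeas
    rw [← lintegral_indicator hSmeas, MeasureTheory.Measure.volume_eq_prod,
      lintegral_prod _ hmeasF.aemeasurable, ← lintegral_indicator hBmeas]
    refine lintegral_congr fun x => ?_
    by_cases hx : x ∈ B
    · have hpt : ∀ y : ℂ, (S.indicator
          fun z : ℂ × ℂ => ENNReal.ofReal (C2 * ‖z.1‖ ^ q')) (x, y)
          = (Ann x).indicator (fun _ => ENNReal.ofReal (C2 * ‖x‖ ^ q')) y := by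
        intro y
        by_cases hy : y ∈ Ann x
        · rw [Set.indicator_of_mem (show (x,y) ∈ S from ⟨hx, hy⟩),
            Set.indicator_of_mem hy]
        · rw [Set.indicator_of_notMem (show (x,y) ∉ S from fun h => hy h.2),
            Set.indicator_of_notMem hy]
      simp_rw [hpt]
      rw [lintegral_indicator_const (hAnnmeas x), Set.indicator_of_mem hx]
    · have hpt : ∀ y : ℂ, (S.indicator
          fun z : ℂ × ℂ => ENNReal.ofReal (C2 * ‖z.1‖ ^ q')) (x, y) = 0 :=
        fun y => Set.indicator_of_notMem (fun h => hx h.1) _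
      simp_rw [hpt]
      rw [lintegral_zero, Set.indicator_of_notMem hx]
  -- rewrite the B-integrand
  have stepD : ∀ x ∈ B, ENNReal.ofReal (C2 * ‖x‖ ^ q') * volume (Ann x)
      = ENNReal.ofReal C3 * ENNReal.ofReal (‖x‖ ^ q) := by
    intro x hx
    set t : ℝ := ‖x‖ with htdef
    have ht0 : 0 < t := norm_pos_iff.mpr hx.2
    have hrx : r x = (k:ℝ) * t ^ (1/b) := rfl
    have h4 : (t ^ (1/b)) ^ (2:ℕ) = t ^ ((2:ℝ)/b) := by
      rw [← Real.rpow_natCast (t ^ (1/b)) 2, ← Real.rpow_mul ht0.le]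
      congr 1
      push_cast
      ring
    have e3 : Real.pi * (3/4) * (r x)^2 = (Real.pi * (3/4) * (k:ℝ)^2) * t ^ ((2:ℝ)/b) := by
      rw [hrx, mul_pow, h4]
      ring
    have e4 : t ^ q' * t ^ ((2:ℝ)/b) = t ^ q := by
      rw [← Real.rpow_add ht0, hqdef]
    rw [hvolAnn x, e3, ← ENNReal.ofReal_mul (by positivity)]
    rw [show C2 * t ^ q' * (Real.pi * (3/4) * (k:ℝ)^2 * t ^ ((2:ℝ)/b))
        = C3 * (t ^ q' * t ^ ((2:ℝ)/b)) from by rw [hC3def]; ring, e4]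
    exact ENNReal.ofReal_mul hC30.le
  have hmq : Measurable fun x : ℂ => ENNReal.ofReal (‖x‖ ^ q) :=
    ENNReal.measurable_ofReal.comp
      (measurable_rpow_const' habs (fun x => norm_nonneg _) q)
  have hdiv : (∫⁻ z in S, ENNReal.ofReal (C2 * ‖z.1‖ ^ q')) = ⊤ := by
    rw [hTon, setLIntegral_congr_fun hBmeas stepD,
      lintegral_const_mul _ hmq, hBdef, aux_div q δ hq hδ0 hδ1]
    refine ENNReal.mul_top ?_
    simp only [ne_eq, ENNReal.ofReal_eq_zero, not_le]
    exact hC30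
  -- inclusion into the unit polydisc
  have hSsub : S ⊆ (ball (0:ℂ) 1) ×ˢ (ball (0:ℂ) 1) := by
    intro z hz
    rw [hmemS] at hz
    obtain ⟨hz1, hu1, _⟩ := hz
    have h1 : ‖z.1‖ < δ := abs_mem_ball'.1 hz1.1
    constructor
    · exact abs_mem_ball'.2 (lt_of_lt_of_le h1 hδ1)
    · exact abs_mem_ball'.2 (lt_trans hu1 (hrlt1 z.1 h1))
  refine top_unique ?_
  calc (⊤ : ENNReal) = ∫⁻ z in S, ENNReal.ofReal (C2 * ‖z.1‖ ^ q') := hdiv.symm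
    _ ≤ ∫⁻ z in S, ENNReal.ofReal (‖z.2‖ ^ (2 * m) *
          (‖z.1‖ ^ (-(2 * (1 - ε)) : ℝ) *
            (‖z.1‖ + (‖z.2‖ / (k : ℝ)) ^ b) ^ (-a : ℝ))) :=
        setLIntegral_mono' hSmeas stepA
    _ ≤ _ := lintegral_mono_set hSsub
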